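/- Let f ∈ C[0,1] and λ ∈ rca[0,1] with ⟨λ, f⟩ ≠ 0. Then for any μ ∈ J(f), λ ∉ D̂*J(f, μ)(θ**): choosing g_t = (1±t)f (sign according to the sign of ⟨λ, f⟩) and γ_t = (1±t)μ ∈ J(g_t), the quotient ⟨λ, g_t − f⟩/(‖g_t − f‖ + ‖γ_t − μ‖) converges to |⟨λ, f⟩|/(2‖f‖) > 0 as t ↓ 0. -/

import Mathlib

open MeasureTheory
open scoped Topology

/-- The unit interval `[0,1]` as a compact metric measurable space. -/
abbrev I01 := Set.Icc (0 : ℝ) 1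

/-- Integration of a function against a signed (regular Borel) measure, via its
Jordan decomposition: `∫ f dν = ∫ f dν⁺ − ∫ f dν⁻`. -/
noncomputable def sInt (ν : SignedMeasure I01) (f : I01 → ℝ) : ℝ :=
  (∫ x, f x ∂ν.toJordanDecomposition.posPart) -
    ∫ x, f x ∂ν.toJordanDecomposition.negPart

/-- The total variation norm of a signed measure on `[0,1]`. -/
noncomputable def tvNorm (ν : SignedMeasure I01) : ℝ :=
  (ν.totalVariation Set.univ).toReal

/-- The normalized duality mapping `J : C[0,1] ⇉ rca[0,1]`:
`J(f) = {ν : ⟨ν, f⟩ = ‖ν‖‖f‖ = ‖f‖² = ‖ν‖²}`. -/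
noncomputable def JsetC (f : C(I01, ℝ)) : Set (SignedMeasure I01) :=
  {ν | sInt ν (fun s => f s) = ‖f‖ ^ 2 ∧ tvNorm ν = ‖f‖}

/-- The maximizing set `M(f) = {t ∈ [0,1] : |f(t)| = ‖f‖}`. -/
def maxSet (f : C(I01, ℝ)) : Set I01 := {t | |f t| = ‖f‖}

/-- `λ ∈ D̂*J(f, μ)(Φ)`: the regular (Fréchet) coderivative condition for the set-valued
normalized duality mapping `J` on `C[0,1]`, i.e.
`limsup_{(g,γ)→(f,μ), γ∈J(g)} (⟨λ, g−f⟩ − ⟨Φ, γ−μ⟩)/(‖g−f‖ + ‖γ−μ‖) ≤ 0`. -/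
noncomputable def memMDC (f : C(I01, ℝ)) (μ : SignedMeasure I01)
    (Φ : SignedMeasure I01 → ℝ) (lam : SignedMeasure I01) : Prop :=
  ∀ ε > (0 : ℝ), ∃ δ > (0 : ℝ), ∀ (g : C(I01, ℝ)) (γ : SignedMeasure I01),
    γ ∈ JsetC g → ‖g - f‖ < δ → tvNorm (γ - μ) < δ →
    (sInt lam (fun s => g s - f s) - Φ (γ - μ)) / (‖g - f‖ + tvNorm (γ - μ)) ≤ ε

lemma sInt_fun_mul (ν : SignedMeasure I01) (a : ℝ) (h : I01 → ℝ) :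
    sInt ν (fun s => a * h s) = a * sInt ν h := by
  simp [sInt, integral_const_mul, mul_sub]

lemma tvNorm_smul_nonneg (a : ℝ) (ha : 0 ≤ a) (ν : SignedMeasure I01) :
    tvNorm (a • ν) = a * tvNorm ν := by
  simp only [tvNorm, SignedMeasure.totalVariation,
    SignedMeasure.toJordanDecomposition_smul_real,
    MeasureTheory.JordanDecomposition.real_smul_posPart_nonneg _ _ ha,
    MeasureTheory.JordanDecomposition.real_smul_negPart_nonneg _ _ ha]
  simp only [Measure.coe_add, Pi.add_apply, Measure.smul_apply, smul_eq_mul,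
    ENNReal.smul_def]
  rw [← mul_add, ENNReal.toReal_mul]
  simp [ENNReal.coe_toReal, Real.coe_toNNReal a ha]

lemma tvNorm_smul (a : ℝ) (ν : SignedMeasure I01) :
    tvNorm (a • ν) = |a| * tvNorm ν := by
  rcases le_or_gt 0 a with ha | ha
  · rw [abs_of_nonneg ha, tvNorm_smul_nonneg a ha]
  · have : a • ν = -((-a) • ν) := by ext i hi; simp
    rw [this, show tvNorm (-((-a) • ν)) = tvNorm ((-a) • ν) from ?_,
      tvNorm_smul_nonneg (-a) (by linarith), abs_of_neg ha]
    simp [tvNorm, SignedMeasure.totalVariation_neg]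

lemma sInt_smul_measure (a : ℝ) (ha : 0 ≤ a) (ν : SignedMeasure I01) (h : I01 → ℝ) :
    sInt (a • ν) h = a * sInt ν h := by
  simp only [sInt, SignedMeasure.toJordanDecomposition_smul_real,
    MeasureTheory.JordanDecomposition.real_smul_posPart_nonneg _ _ ha,
    MeasureTheory.JordanDecomposition.real_smul_negPart_nonneg _ _ ha,
    integral_smul_nnreal_measure]
  simp only [NNReal.smul_def, Real.coe_toNNReal a ha, smul_eq_mul]
  ring

/-- let `f ∈ C[0,1]` and `λ ∈ rca[0,1]` with `⟨λ, f⟩ ≠ 0`.  Then for any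
`μ ∈ J(f)`, `λ ∉ D̂*J(f, μ)(θ**)`: with `g_t = (1 ± t)f` (sign according to `⟨λ, f⟩`) and
`γ_t = (1 ± t)μ ∈ J(g_t)`, the quotient `⟨λ, g_t − f⟩/(‖g_t − f‖ + ‖γ_t − μ‖)` converges
to `|⟨λ, f⟩|/(2‖f‖) > 0` as `t ↓ 0`. -/
theorem lam_not_mem_coderivative_C01 (f : C(I01, ℝ)) (lam : SignedMeasure I01)
    (hlf : sInt lam (fun s => f s) ≠ 0)
    (μ : SignedMeasure I01) (hμ : μ ∈ JsetC f)
    (c : ℝ) (hc : c = if 0 < sInt lam (fun s => f s) then 1 else -1) :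
    Filter.Tendsto
      (fun t : ℝ =>
        sInt lam (fun s => ((1 + c * t) • f) s - f s) /
          (‖(1 + c * t) • f - f‖ + tvNorm ((1 + c * t) • μ - μ)))
      (𝓝[>] 0) (𝓝 (|sInt lam (fun s => f s)| / (2 * ‖f‖))) ∧
    0 < |sInt lam (fun s => f s)| / (2 * ‖f‖) ∧
    ¬ memMDC f μ (fun _ => 0) lam := by
  set L := sInt lam (fun s => f s) with hL
  have hfn : 0 < ‖f‖ := by
    rcases eq_or_lt_of_le (norm_nonneg f) with h | h
    · exfalso; apply hlf
      have hf0 : f = 0 := by rwa [eq_comm, norm_eq_zero] at h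
      simp [hL, hf0, sInt]
    · exact h
  have hc1 : c = 1 ∨ c = -1 := by rw [hc]; split <;> simp
  have habs_c : |c| = 1 := by rcases hc1 with h | h <;> simp [h]
  have hcL : c * L = |L| := by
    by_cases hpos : 0 < L
    · rw [hc, if_pos hpos, abs_of_pos hpos, one_mul]
    · have hneg : L < 0 := lt_of_le_of_ne (not_lt.1 hpos) hlf
      rw [hc, if_neg hpos, abs_of_neg hneg]; ring
  have habs : ∀ t : ℝ, 0 < t → |c * t| = t := fun t ht => by
    rw [abs_mul, habs_c, one_mul, abs_of_pos ht]
  have h2 : ∀ t : ℝ, (1 + c * t) • f - f = (c * t) • f := fun t => by module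
  have h3 : ∀ t : ℝ, (1 + c * t) • μ - μ = (c * t) • μ := fun t => by module
  have hnf : ∀ t : ℝ, 0 < t → ‖(1 + c * t) • f - f‖ = t * ‖f‖ := by
    intro t ht
    rw [h2 t, show ‖(c * t) • f‖ = ‖c * t‖ * ‖f‖ from norm_smul _ f, Real.norm_eq_abs,
      habs t ht]
  have hnμ : ∀ t : ℝ, 0 < t → tvNorm ((1 + c * t) • μ - μ) = t * ‖f‖ := by
    intro t ht
    rw [h3 t, tvNorm_smul, hμ.2, habs t ht]
  have key : ∀ t : ℝ, 0 < t →
      sInt lam (fun s => ((1 + c * t) • f) s - f s) /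
        (‖(1 + c * t) • f - f‖ + tvNorm ((1 + c * t) • μ - μ)) = |L| / (2 * ‖f‖) := by
    intro t ht
    have h1 : (fun s => ((1 + c * t) • f) s - f s) = fun s => (c * t) * f s := by
      funext s; simp [ContinuousMap.smul_apply]; ring
    rw [h1, sInt_fun_mul, hnf t ht, hnμ t ht, ← hL,
      show c * t * L = t * (c * L) by ring,
      show t * ‖f‖ + t * ‖f‖ = t * (2 * ‖f‖) by ring,
      mul_div_mul_left _ _ (ne_of_gt ht), hcL]
  have hpos : 0 < |L| / (2 * ‖f‖) := div_pos (abs_pos.2 hlf) (by linarith)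
  have hmem : ∀ t : ℝ, 0 < t → t < 1 → ((1 + c * t) • μ) ∈ JsetC ((1 + c * t) • f) := by
    intro t ht0 ht1
    have ha : 0 ≤ 1 + c * t := by rcases hc1 with h | h <;> rw [h] <;> linarith
    have hng : ‖(1 + c * t) • f‖ = (1 + c * t) * ‖f‖ := by
      rw [show ‖(1 + c * t) • f‖ = ‖1 + c * t‖ * ‖f‖ from norm_smul _ f, Real.norm_eq_abs,
        abs_of_nonneg ha]
    constructor
    · have h1 : (fun s => ((1 + c * t) • f) s) = fun s => (1 + c * t) * f s := by
        funext s; simp [ContinuousMap.smul_apply]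
      rw [h1, sInt_fun_mul, sInt_smul_measure _ ha, hμ.1, hng]; ring
    · rw [tvNorm_smul_nonneg _ ha, hμ.2, hng]
  refine ⟨?_, hpos, ?_⟩
  · apply Filter.Tendsto.congr'
      (Filter.eventuallyEq_of_mem self_mem_nhdsWithin fun t ht => (key t ht).symm)
      tendsto_const_nhds
  · intro hm
    obtain ⟨δ, hδ, hd⟩ := hm (|L| / (4 * ‖f‖)) (div_pos (abs_pos.2 hlf) (by linarith))
    set t : ℝ := min (δ / (‖f‖ + 1)) (1 / 2) with htdef
    have ht0 : 0 < t := lt_min (div_pos hδ (by linarith)) (by norm_num)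
    have ht1 : t < 1 := lt_of_le_of_lt (min_le_right _ _) (by norm_num)
    have htδ : t * ‖f‖ < δ := by
      have h := min_le_left (δ / (‖f‖ + 1)) (1 / 2)
      calc t * ‖f‖ ≤ (δ / (‖f‖ + 1)) * ‖f‖ :=
            mul_le_mul_of_nonneg_right h (norm_nonneg f)
        _ < δ := by
            rw [div_mul_eq_mul_div, div_lt_iff₀ (by linarith)]
            nlinarith
    have := hd ((1 + c * t) • f) ((1 + c * t) • μ) (hmem t ht0 ht1)
      (by rw [hnf t ht0]; exact htδ) (by rw [hnμ t ht0]; exact htδ)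
    rw [sub_zero, key t ht0] at this
    have hlt : |L| / (4 * ‖f‖) < |L| / (2 * ‖f‖) :=
      div_lt_div_of_pos_left (abs_pos.2 hlf) (by linarith) (by linarith)
    linarith
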